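/- arXiv:2112.14627 — 5 statements merged into one kernel-verified Lean document; each statement's English description precedes it below -/
import Mathlib

section
/- For real numbers $a, b$ and $1 < p < 2$, there exists a constant $C_p > 0$ depending only on $p$ such that $|a-b|^p \le C_p\,\big[(|a|^{p-2}a - |b|^{p-2}b)(a-b)\big]^{p/2}\,(|a|^p + |b|^p)^{(2-p)/2}$. -/
open Real

-- signed power merge
lemma pow_merge (p t : ℝ) (hp1 : 1 < p) (hp2 : p < 2) (ht : 0 ≤ t) :
    t ^ (p - 2) * t = t ^ (p - 1) := by
  rcases eq_or_lt_of_le ht with h | h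
  · rw [← h, Real.zero_rpow (by linarith), Real.zero_rpow (by linarith), mul_zero]
  · rw [show p - 1 = (p - 2) + 1 by ring, Real.rpow_add_one h.ne']

-- tangent line inequality from concavity of t^(p-1)
lemma tangent (p a b : ℝ) (hp1 : 1 < p) (hp2 : p < 2) (hb : 0 ≤ b) (hba : b ≤ a) :
    (p - 1) * a ^ (p - 2) * (a - b) ≤ a ^ (p - 1) - b ^ (p - 1) := by
  rcases eq_or_lt_of_le (hb.trans hba) with h | ha
  · have ha0 : a = 0 := h.symm
    have hb0 : b = 0 := le_antisymm (ha0 ▸ hba) hb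
    subst ha0; subst hb0
    simp [Real.zero_rpow (show p - 1 ≠ 0 by intro hh; linarith)]
  · have hs : -1 ≤ b / a - 1 := by
      have : 0 ≤ b / a := div_nonneg hb ha.le
      linarith
    have hbern := rpow_one_add_le_one_add_mul_self hs (p := p - 1) (by linarith) (by linarith)
    have h1 : (1 : ℝ) + (b / a - 1) = b / a := by ring
    rw [h1, Real.div_rpow hb ha.le] at hbern
    -- (b/a)^(p-1) ≤ 1 + (p-1)*(b/a - 1)
    have hap : 0 < a ^ (p - 1) := Real.rpow_pos_of_pos ha _
    have h2 : b ^ (p - 1) ≤ a ^ (p - 1) * (1 + (p - 1) * (b / a - 1)) := by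
      rw [div_le_iff₀ hap] at hbern
      linarith [hbern]
    have h3 : a ^ (p - 1) * ((p - 1) * (b / a - 1)) = -((p - 1) * a ^ (p - 2) * (a - b)) := by
      have ham : a ^ (p - 2) * a = a ^ (p - 1) := pow_merge p a hp1 hp2 ha.le
      field_simp
      linear_combination ((p - 1) * (a - b)) * ham
    nlinarith [h2, h3]

-- key lemma for 0 ≤ a, |b| ≤ a
lemma key1 (p a b : ℝ) (hp1 : 1 < p) (hp2 : p < 2) (ha : 0 ≤ a) (hba : |b| ≤ a) :
    (p - 1) / 2 * ((a - b) ^ 2 * |a| ^ (p - 2)) ≤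
      (|a| ^ (p - 2) * a - |b| ^ (p - 2) * b) * (a - b) := by
  rw [abs_of_nonneg ha]
  rcases eq_or_lt_of_le ha with h | ha'
  · have hb0 : b = 0 := by
      have : |b| = 0 := le_antisymm (h ▸ hba) (abs_nonneg b)
      exact abs_eq_zero.mp this
    subst hb0; rw [← h]
    simp [Real.zero_rpow (show p - 2 ≠ 0 by intro hh; linarith)]
  have hpos : 0 ≤ a ^ (p - 2) := Real.rpow_nonneg ha _
  have hma : a ^ (p - 2) * a = a ^ (p - 1) := pow_merge p a hp1 hp2 ha
  rcases le_or_gt 0 b with hb | hb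
  · -- same sign: 0 ≤ b ≤ a
    rw [abs_of_nonneg hb]
    have hba' : b ≤ a := (le_abs_self b).trans hba
    have ht := tangent p a b hp1 hp2 hb hba'
    have hmb : b ^ (p - 2) * b = b ^ (p - 1) := pow_merge p b hp1 hp2 hb
    have hab : 0 ≤ a - b := by linarith
    rw [hma, hmb]
    have h1 := mul_le_mul_of_nonneg_right ht hab
    have h2 : (p - 1) * a ^ (p - 2) * (a - b) * (a - b)
        = (p - 1) * ((a - b) ^ 2 * a ^ (p - 2)) := by ring
    have hX : 0 ≤ (a - b) ^ 2 * a ^ (p - 2) := mul_nonneg (sq_nonneg _) hpos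
    have hP : 0 ≤ (p - 1) * ((a - b) ^ 2 * a ^ (p - 2)) :=
      mul_nonneg (by linarith) hX
    linarith [h1, h2, hP]
  · -- opposite sign: b < 0 < a
    rw [abs_of_neg hb]
    have hm : (-b) ^ (p - 2) * (-b) = (-b) ^ (p - 1) :=
      pow_merge p (-b) hp1 hp2 (by linarith)
    have hm' : (-b) ^ (p - 2) * b = -((-b) ^ (p - 1)) := by linear_combination -hm
    have hnb : 0 ≤ (-b) ^ (p - 1) := Real.rpow_nonneg (by linarith) _
    have hab2 : a - b ≤ 2 * a := by
      have := neg_le_of_abs_le hba; linarith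
    have hab : 0 < a - b := by linarith
    have hQ : 0 ≤ (a - b) * a ^ (p - 1) :=
      mul_nonneg hab.le (Real.rpow_nonneg ha _)
    have e0 := mul_le_mul_of_nonneg_right hab2 (mul_nonneg hab.le hpos)
    have e0' : 2 * a * ((a - b) * a ^ (p - 2)) = 2 * ((a - b) * a ^ (p - 1)) := by
      rw [← hma]; ring
    have e1 : (a - b) ^ 2 * a ^ (p - 2) ≤ 2 * ((a - b) * a ^ (p - 1)) := by
      nlinarith [e0, e0']
    have e1' := mul_le_mul_of_nonneg_left e1 (show (0:ℝ) ≤ (p - 1) / 2 by linarith)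
    have e2 : (p - 1) * ((a - b) * a ^ (p - 1)) ≤ 1 * ((a - b) * a ^ (p - 1)) :=
      mul_le_mul_of_nonneg_right (by linarith) hQ
    have e3 : 0 ≤ (-b) ^ (p - 1) * (a - b) := mul_nonneg hnb hab.le
    rw [hma, hm']
    nlinarith [e1', e2, e3]

-- key lemma when |b| ≤ |a|
lemma key2a (p a b : ℝ) (hp1 : 1 < p) (hp2 : p < 2) (h : |b| ≤ |a|) :
    (p - 1) / 2 * ((a - b) ^ 2 * |a| ^ (p - 2)) ≤
      (|a| ^ (p - 2) * a - |b| ^ (p - 2) * b) * (a - b) := by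
  rcases le_or_gt 0 a with ha | ha
  · exact key1 p a b hp1 hp2 ha (h.trans_eq (abs_of_nonneg ha))
  · have := key1 p (-a) (-b) hp1 hp2 (by rw [← abs_of_neg ha]; exact abs_nonneg a)
      (by rw [abs_neg, ← abs_of_neg ha]; exact h)
    rw [abs_neg, abs_neg] at this
    nlinarith [this]

-- full key lemma
lemma key2 (p a b : ℝ) (hp1 : 1 < p) (hp2 : p < 2) :
    (p - 1) / 2 * ((a - b) ^ 2 * (max |a| |b|) ^ (p - 2)) ≤
      (|a| ^ (p - 2) * a - |b| ^ (p - 2) * b) * (a - b) := by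
  rcases le_total |b| |a| with h | h
  · rw [max_eq_left h]
    exact key2a p a b hp1 hp2 h
  · rw [max_eq_right h]
    have := key2a p b a hp1 hp2 h
    nlinarith [this]



theorem simon_inequality_p_lt_two (p : ℝ) (hp1 : 1 < p) (hp2 : p < 2) :
    ∃ C : ℝ, 0 < C ∧ ∀ a b : ℝ,
      |a - b| ^ p ≤
        C * ((|a| ^ (p - 2) * a - |b| ^ (p - 2) * b) * (a - b)) ^ (p / 2) *
          (|a| ^ p + |b| ^ p) ^ ((2 - p) / 2) := by

  set c : ℝ := (p - 1) / 2 with hc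
  have hc0 : 0 < c := by rw [hc]; linarith
  have hcp : 0 < c ^ (p / 2) := Real.rpow_pos_of_pos hc0 _
  refine ⟨(c ^ (p / 2))⁻¹, inv_pos.mpr hcp, ?_⟩
  intro a b
  set M : ℝ := max |a| |b| with hM
  have hM0 : 0 ≤ M := le_trans (abs_nonneg a) (le_max_left _ _)
  rcases eq_or_lt_of_le hM0 with h0 | hMpos
  · -- M = 0, so a = b = 0
    have ha : a = 0 := by
      have : |a| ≤ 0 := h0 ▸ le_max_left |a| |b|
      exact abs_eq_zero.mp (le_antisymm this (abs_nonneg a))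
    have hb : b = 0 := by
      have : |b| ≤ 0 := h0 ▸ le_max_right |a| |b|
      exact abs_eq_zero.mp (le_antisymm this (abs_nonneg b))
    subst ha; subst hb
    simp [Real.zero_rpow (show p ≠ 0 by intro hh; linarith),
      Real.zero_rpow (show p / 2 ≠ 0 by intro hh; simp at hh; linarith)]
  · set D : ℝ := (|a| ^ (p - 2) * a - |b| ^ (p - 2) * b) * (a - b) with hD
    have hkey : c * ((a - b) ^ 2 * M ^ (p - 2)) ≤ D := key2 p a b hp1 hp2
    have hMp2 : 0 ≤ M ^ (p - 2) := Real.rpow_nonneg hM0 _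
    have hL0 : 0 ≤ c * ((a - b) ^ 2 * M ^ (p - 2)) :=
      mul_nonneg hc0.le (mul_nonneg (sq_nonneg _) hMp2)
    have hDnn : 0 ≤ D := hL0.trans hkey
    have hp20 : (0:ℝ) ≤ p / 2 := by linarith
    have step1 : (c * ((a - b) ^ 2 * M ^ (p - 2))) ^ (p / 2) ≤ D ^ (p / 2) :=
      Real.rpow_le_rpow hL0 hkey hp20
    -- rewrite LHS of step1
    have expand : (c * ((a - b) ^ 2 * M ^ (p - 2))) ^ (p / 2)
        = c ^ (p / 2) * |a - b| ^ p * M ^ ((p - 2) * (p / 2)) := by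
      rw [Real.mul_rpow hc0.le (mul_nonneg (sq_nonneg _) hMp2),
        Real.mul_rpow (sq_nonneg _) hMp2, ← sq_abs,
        ← Real.rpow_natCast |a - b| 2, ← Real.rpow_mul (abs_nonneg _),
        ← Real.rpow_mul hM0]
      norm_num
      ring_nf
    have step1' : c ^ (p / 2) * |a - b| ^ p * M ^ ((p - 2) * (p / 2)) ≤ D ^ (p / 2) := by
      rw [← expand]; exact step1
    -- second factor
    have hMpS : M ^ p ≤ |a| ^ p + |b| ^ p := by
      rcases max_cases |a| |b| with ⟨he, _⟩ | ⟨he, _⟩ <;> rw [hM, he]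
      · nlinarith [Real.rpow_nonneg (abs_nonneg b) p]
      · nlinarith [Real.rpow_nonneg (abs_nonneg a) p]
    have step2 : M ^ (p * ((2 - p) / 2)) ≤ (|a| ^ p + |b| ^ p) ^ ((2 - p) / 2) := by
      rw [Real.rpow_mul hM0]
      exact Real.rpow_le_rpow (Real.rpow_nonneg hM0 _) hMpS (by linarith)
    -- combine
    have hMM : M ^ ((p - 2) * (p / 2)) * M ^ (p * ((2 - p) / 2)) = 1 := by
      rw [← Real.rpow_add hMpos, show (p - 2) * (p / 2) + p * ((2 - p) / 2) = 0 by ring,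
        Real.rpow_zero]
    have hcc : (c ^ (p / 2))⁻¹ * c ^ (p / 2) = 1 := inv_mul_cancel₀ hcp.ne'
    calc |a - b| ^ p
        = (c ^ (p / 2))⁻¹ * (c ^ (p / 2) * |a - b| ^ p * M ^ ((p - 2) * (p / 2)))
            * M ^ (p * ((2 - p) / 2)) := by
          rw [show (c ^ (p / 2))⁻¹ * (c ^ (p / 2) * |a - b| ^ p * M ^ ((p - 2) * (p / 2)))
              * M ^ (p * ((2 - p) / 2))
            = ((c ^ (p / 2))⁻¹ * c ^ (p / 2)) * |a - b| ^ p
              * (M ^ ((p - 2) * (p / 2)) * M ^ (p * ((2 - p) / 2))) by ring,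
            hMM, hcc, one_mul, mul_one]
      _ ≤ (c ^ (p / 2))⁻¹ * D ^ (p / 2) * (|a| ^ p + |b| ^ p) ^ ((2 - p) / 2) := by
          have h1 : (c ^ (p / 2))⁻¹ * (c ^ (p / 2) * |a - b| ^ p * M ^ ((p - 2) * (p / 2)))
              ≤ (c ^ (p / 2))⁻¹ * D ^ (p / 2) :=
            mul_le_mul_of_nonneg_left step1' (inv_pos.mpr hcp).le
          have h2 : 0 ≤ M ^ (p * ((2 - p) / 2)) := Real.rpow_nonneg hM0 _
          have h3 : 0 ≤ (c ^ (p / 2))⁻¹ * D ^ (p / 2) :=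
            mul_nonneg (inv_pos.mpr hcp).le (Real.rpow_nonneg hDnn _)
          exact mul_le_mul h1 step2 h2 h3
end

section
/- Let $a, b, S > 0$, $\theta > 1$, $1 < p$, and $p^* > \theta p$ be real numbers. Define $H(t) = \frac{a}{p}S t^p + \frac{b}{\theta p}S^\theta t^{\theta p} - \frac{1}{p^*}t^{p^*}$ for $t \ge 0$. Then there exists a unique $\hat{T} > 0$ such that $H(\hat{T}) = \sup_{t \ge 0} H(t)$. -/
open Real Set

theorem unique_max_of_fibering_map (a b S θ p pst : ℝ)
    (ha : 0 < a) (hb : 0 < b) (hS : 0 < S) (hθ : 1 < θ) (hp : 1 < p)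
    (hpst : θ * p < pst) :
    ∃! T : ℝ, 0 < T ∧
      IsMaxOn (fun t : ℝ => a / p * S * t ^ p + b / (θ * p) * S ^ θ * t ^ (θ * p)
        - 1 / pst * t ^ pst) (Set.Ici (0 : ℝ)) T := by
  set f : ℝ → ℝ := fun t => a / p * S * t ^ p + b / (θ * p) * S ^ θ * t ^ (θ * p)
      - 1 / pst * t ^ pst with hf
  have hp0 : (0:ℝ) < p := lt_trans one_pos hp
  have hθ0 : (0:ℝ) < θ := lt_trans one_pos hθ
  have hθp0 : (0:ℝ) < θ * p := mul_pos hθ0 hp0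
  have hθp1 : (1:ℝ) < θ * p := by nlinarith
  have hpst1 : (1:ℝ) < pst := lt_trans hθp1 hpst
  have hpst0 : (0:ℝ) < pst := lt_trans one_pos hpst1
  set c := b * S ^ θ with hc
  have hc0 : 0 < c := mul_pos hb (rpow_pos_of_pos hS θ)
  have haS : 0 < a * S := mul_pos ha hS
  set φ : ℝ → ℝ := fun t => a * S * t ^ (p - θ * p) + c - t ^ (pst - θ * p) with hφ
  have hexp1 : p - θ * p < 0 := by nlinarith
  have hexp2 : 0 < pst - θ * p := by linarith
  -- φ is strictly decreasing on (0,∞)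
  have hanti : StrictAntiOn φ (Ioi 0) := by
    intro x hx y hy hxy
    have h1 : y ^ (p - θ*p) < x ^ (p - θ*p) := rpow_lt_rpow_of_neg hx hxy hexp1
    have h2 : x ^ (pst - θ*p) < y ^ (pst - θ*p) := rpow_lt_rpow (le_of_lt hx) hxy hexp2
    have h3 := mul_lt_mul_of_pos_left h1 haS
    simp only [hφ]
    linarith
  -- φ positive near 0
  set t0 : ℝ := c ^ (pst - θ * p)⁻¹ / 2 with ht0
  have ht00 : 0 < t0 := by positivity
  have hφt0 : 0 < φ t0 := by
    have h1 : t0 ^ (pst - θ * p) = c / 2 ^ (pst - θ * p) := by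
      rw [ht0, div_rpow (rpow_nonneg hc0.le _) (by norm_num),
        Real.rpow_inv_rpow hc0.le hexp2.ne']
    have h2 : (1:ℝ) < 2 ^ (pst - θ * p) := one_lt_rpow one_lt_two hexp2
    have h3 : c / 2 ^ (pst - θ * p) < c := by
      rw [div_lt_iff₀ (by linarith)]; nlinarith
    have h4 : 0 < a * S * t0 ^ (p - θ * p) := mul_pos haS (rpow_pos_of_pos ht00 _)
    simp only [hφ]
    rw [h1] at *
    linarith
  -- φ negative at some large point
  set t1 : ℝ := (a * S + c + 1) ^ (pst - θ * p)⁻¹ with ht1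
  have hM1 : (1:ℝ) < a * S + c + 1 := by linarith
  have ht11 : (1:ℝ) ≤ t1 := Real.one_le_rpow hM1.le (by positivity)
  have ht10 : 0 < t1 := lt_of_lt_of_le one_pos ht11
  have hφt1 : φ t1 < 0 := by
    have h1 : t1 ^ (pst - θ * p) = a * S + c + 1 := by
      rw [ht1, Real.rpow_inv_rpow (by linarith) hexp2.ne']
    have h2 : t1 ^ (p - θ * p) ≤ 1 :=
      Real.rpow_le_one_of_one_le_of_nonpos ht11 hexp1.le
    have h3 : a * S * t1 ^ (p - θ * p) ≤ a * S * 1 :=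
      mul_le_mul_of_nonneg_left h2 haS.le
    simp only [hφ]
    rw [h1]
    linarith
  have ht01 : t0 < t1 := by
    by_contra h
    push_neg at h
    rcases eq_or_lt_of_le h with h | h
    · rw [h] at hφt1; linarith
    · have := hanti ht10 (mem_Ioi.mpr ht00) h; linarith
  -- continuity of φ on positive reals
  have hφcont : ContinuousOn φ (Icc t0 t1) := by
    intro x hx
    have hx0 : x ≠ 0 := (lt_of_lt_of_le ht00 hx.1).ne'
    exact (((continuousAt_const.mul (Real.continuousAt_rpow_const x _ (Or.inl hx0))).add
      continuousAt_const).sub (Real.continuousAt_rpow_const x _ (Or.inl hx0))).continuousWithinAt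
  -- root of φ
  obtain ⟨T, hTmem, hTroot⟩ : ∃ T ∈ Icc t0 t1, φ T = 0 := by
    have h0 : (0:ℝ) ∈ Icc (φ t1) (φ t0) := ⟨hφt1.le, hφt0.le⟩
    have := intermediate_value_Icc' ht01.le hφcont h0
    obtain ⟨T, hT, hT0⟩ := this
    exact ⟨T, hT, hT0⟩
  have hT0 : 0 < T := lt_of_lt_of_le ht00 hTmem.1
  -- derivative of f
  have key : ∀ t : ℝ, 0 < t → HasDerivAt f (t ^ (θ*p-1) * φ t) t := by
    intro t ht
    have e1 : HasDerivAt (fun t : ℝ => a / p * S * t ^ p) (a * S * t ^ (p-1)) t := by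
      have := (Real.hasDerivAt_rpow_const (p := p) (Or.inl ht.ne')).const_mul (a / p * S)
      refine this.congr_deriv ?_
      field_simp
    have e2 : HasDerivAt (fun t : ℝ => b / (θ * p) * S ^ θ * t ^ (θ * p))
        (c * t ^ (θ*p-1)) t := by
      have := (Real.hasDerivAt_rpow_const (p := θ * p) (Or.inl ht.ne')).const_mul
        (b / (θ * p) * S ^ θ)
      refine this.congr_deriv ?_
      rw [hc]
      field_simp
    have e3 : HasDerivAt (fun t : ℝ => 1 / pst * t ^ pst) (t ^ (pst-1)) t := by
      have := (Real.hasDerivAt_rpow_const (p := pst) (Or.inl ht.ne')).const_mul (1 / pst)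
      refine this.congr_deriv ?_
      field_simp
    have := (e1.add e2).sub e3
    refine this.congr_deriv ?_
    simp only [hφ]
    have r1 : t ^ (θ*p-1) * t ^ (p-θ*p) = t ^ (p-1) := by
      rw [← Real.rpow_add ht, show θ*p-1+(p-θ*p) = p-1 by ring]
    have r2 : t ^ (θ*p-1) * t ^ (pst-θ*p) = t ^ (pst-1) := by
      rw [← Real.rpow_add ht, show θ*p-1+(pst-θ*p) = pst-1 by ring]
    linear_combination r2 - (a*S) * r1
  -- continuity of f
  have hfc : Continuous f := by
    have c1 : Continuous fun t : ℝ => t ^ p := Real.continuous_rpow_const hp0.le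
    have c2 : Continuous fun t : ℝ => t ^ (θ * p) := Real.continuous_rpow_const hθp0.le
    have c3 : Continuous fun t : ℝ => t ^ pst := Real.continuous_rpow_const hpst0.le
    exact ((continuous_const.mul c1).add (continuous_const.mul c2)).sub
      (continuous_const.mul c3)
  -- f strictly increasing on [0, T]
  have hmono : StrictMonoOn f (Icc 0 T) := by
    apply strictMonoOn_of_deriv_pos (convex_Icc 0 T) hfc.continuousOn
    intro t ht
    rw [interior_Icc] at ht
    rw [(key t ht.1).deriv]
    have hφpos : 0 < φ t := by
      have := hanti (mem_Ioi.mpr ht.1) (mem_Ioi.mpr hT0) ht.2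
      rw [hTroot] at this; exact this
    exact mul_pos (rpow_pos_of_pos ht.1 _) hφpos
  -- f strictly decreasing on [T, ∞)
  have hanti' : StrictAntiOn f (Ici T) := by
    apply strictAntiOn_of_deriv_neg (convex_Ici T) hfc.continuousOn
    intro t ht
    rw [interior_Ici] at ht
    have ht' : 0 < t := lt_trans hT0 ht
    rw [(key t ht').deriv]
    have hφneg : φ t < 0 := by
      have := hanti (mem_Ioi.mpr hT0) (mem_Ioi.mpr ht') ht
      rw [hTroot] at this; exact this
    exact mul_neg_of_pos_of_neg (rpow_pos_of_pos ht' _) hφneg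
  have hmax : IsMaxOn f (Ici 0) T := by
    rw [isMaxOn_iff]
    intro x hx
    rcases le_or_gt x T with h | h
    · rcases eq_or_lt_of_le h with rfl | h'
      · exact le_rfl
      · exact (hmono ⟨hx, h⟩ ⟨hT0.le, le_rfl⟩ h').le
    · exact (hanti' (self_mem_Ici) (le_of_lt h) h).le
  refine ⟨T, ⟨hT0, hmax⟩, ?_⟩
  rintro T' ⟨hT'0, hT'max⟩
  have hEq : f T' = f T :=
    le_antisymm (isMaxOn_iff.mp hmax T' (le_of_lt hT'0))
      (isMaxOn_iff.mp hT'max T (le_of_lt hT0))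
  rcases lt_trichotomy T' T with h | h | h
  · have := hmono ⟨hT'0.le, h.le⟩ ⟨hT0.le, le_rfl⟩ h
    linarith
  · exact h
  · have := hanti' self_mem_Ici h.le h
    linarith
end

section
/- Let $a, b, S > 0$, $\theta > 1$, $1 < p$, $p^* > \theta p$. Define $\hat{H}(t) = aS + bS^\theta t^{(\theta-1)p} - t^{p^*-p}$ for $t > 0$. Then there exists a unique $\hat{T} > 0$ such that $\hat{H}(t) > 0$ for $t \in (0, \hat{T})$ and $\hat{H}(t) < 0$ for $t \in (\hat{T}, \infty)$. -/
theorem unique_sign_change (a b S θ p pst : ℝ)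
    (ha : 0 < a) (hb : 0 < b) (hS : 0 < S) (hθ : 1 < θ) (hp : 1 < p)
    (hpst : θ * p < pst) :
    ∃! T : ℝ, 0 < T ∧
      (∀ t : ℝ, 0 < t → t < T → 0 < a * S + b * S ^ θ * t ^ ((θ - 1) * p) - t ^ (pst - p)) ∧
      (∀ t : ℝ, T < t → a * S + b * S ^ θ * t ^ ((θ - 1) * p) - t ^ (pst - p) < 0) := by
  have hp0 : (0:ℝ) < p := by linarith
  set α := (θ - 1) * p with hαdef
  set β := pst - p with hβdef
  have hα0 : 0 < α := by
    have h1 : 0 < θ - 1 := by linarith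
    positivity
  have hαβ : α < β := by
    simp only [hαdef, hβdef]; nlinarith
  have hγ : 0 < β - α := by linarith
  have hβ0 : 0 < β := by linarith
  set h : ℝ → ℝ := fun t => a * S * t ^ (-α) + b * S ^ θ - t ^ (β - α) with hhdef
  have key : ∀ t : ℝ, 0 < t →
      a * S + b * S ^ θ * t ^ α - t ^ β = t ^ α * h t := by
    intro t ht
    have e1 : t ^ α * t ^ (-α) = 1 := by
      rw [← Real.rpow_add ht]; simp
    have e2 : t ^ α * t ^ (β - α) = t ^ β := by
      rw [← Real.rpow_add ht]; ring_nf
    simp only [hhdef]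
    linear_combination e2 - a * S * e1
  have hmono : ∀ s t : ℝ, 0 < s → s < t → h t < h s := by
    intro s t hs hst
    have ht : 0 < t := hs.trans hst
    have h1 : t ^ (-α) < s ^ (-α) := by
      rw [Real.rpow_neg hs.le, Real.rpow_neg ht.le]
      have hlt : s ^ α < t ^ α := Real.rpow_lt_rpow hs.le hst hα0
      exact inv_strictAnti₀ (Real.rpow_pos_of_pos hs α) hlt
    have h2 : s ^ (β - α) < t ^ (β - α) := Real.rpow_lt_rpow hs.le hst hγ
    have hpos : (0:ℝ) < a * S := mul_pos ha hS
    have h3 := mul_lt_mul_of_pos_left h1 hpos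
    simp only [hhdef]
    linarith
  set C := b * S ^ θ with hCdef
  have hC0 : 0 < C := mul_pos hb (Real.rpow_pos_of_pos hS θ)
  set t0 := min 1 (C ^ (β - α)⁻¹) with ht0def
  have ht0pos : 0 < t0 := lt_min one_pos (Real.rpow_pos_of_pos hC0 _)
  have ht0le1 : t0 ≤ 1 := min_le_left _ _
  have ht0 : 0 < h t0 := by
    have h1 : t0 ^ (β - α) ≤ C := by
      calc t0 ^ (β - α) ≤ (C ^ (β - α)⁻¹) ^ (β - α) :=
            Real.rpow_le_rpow ht0pos.le (min_le_right _ _) hγ.le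
        _ = C := by
            rw [← Real.rpow_mul hC0.le, inv_mul_cancel₀ hγ.ne', Real.rpow_one]
    have h2 : 0 < a * S * t0 ^ (-α) :=
      mul_pos (mul_pos ha hS) (Real.rpow_pos_of_pos ht0pos _)
    simp only [hhdef]
    linarith
  set D := a * S + C + 1 with hDdef
  have hD0 : 0 < D := by positivity
  set t1 := max 1 (D ^ (β - α)⁻¹) with ht1def
  have ht1ge1 : (1:ℝ) ≤ t1 := le_max_left _ _
  have ht1pos : 0 < t1 := lt_of_lt_of_le one_pos ht1ge1
  have ht1 : h t1 < 0 := by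
    have h1 : D ≤ t1 ^ (β - α) := by
      calc D = (D ^ (β - α)⁻¹) ^ (β - α) := by
            rw [← Real.rpow_mul hD0.le, inv_mul_cancel₀ hγ.ne', Real.rpow_one]
        _ ≤ t1 ^ (β - α) :=
            Real.rpow_le_rpow (Real.rpow_pos_of_pos hD0 _).le (le_max_right _ _) hγ.le
    have h2 : t1 ^ (-α) ≤ 1 :=
      Real.rpow_le_one_of_one_le_of_nonpos ht1ge1 (neg_nonpos.mpr hα0.le)
    have h3 : a * S * t1 ^ (-α) ≤ a * S * 1 :=
      mul_le_mul_of_nonneg_left h2 (mul_pos ha hS).le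
    simp only [hhdef]
    linarith
  have hcont : ContinuousOn h (Set.Icc t0 t1) := by
    intro t ht
    have htpos : 0 < t := lt_of_lt_of_le ht0pos ht.1
    apply ContinuousAt.continuousWithinAt
    simp only [hhdef]
    exact ((continuousAt_const.mul
        (Real.continuousAt_rpow_const t (-α) (Or.inl htpos.ne'))).add
        continuousAt_const).sub
      (Real.continuousAt_rpow_const t (β - α) (Or.inl htpos.ne'))
  have ht01 : t0 ≤ t1 := ht0le1.trans ht1ge1
  have hmem : (0:ℝ) ∈ Set.Icc (h t1) (h t0) := ⟨ht1.le, ht0.le⟩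
  obtain ⟨T, hTmem, hT0⟩ := intermediate_value_Icc' ht01 hcont hmem
  have hTpos : 0 < T := lt_of_lt_of_le ht0pos hTmem.1
  have hposT : ∀ t : ℝ, 0 < t → t < T → 0 < a * S + C * t ^ α - t ^ β := by
    intro t ht htT
    rw [key t ht]
    have h1 : h T < h t := hmono t T ht htT
    rw [hT0] at h1
    exact mul_pos (Real.rpow_pos_of_pos ht α) h1
  have hnegT : ∀ t : ℝ, T < t → a * S + C * t ^ α - t ^ β < 0 := by
    intro t hTt
    have ht : 0 < t := hTpos.trans hTt
    rw [key t ht]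
    have h1 : h t < h T := hmono T t hTpos hTt
    rw [hT0] at h1
    exact mul_neg_of_pos_of_neg (Real.rpow_pos_of_pos ht α) h1
  refine ⟨T, ⟨hTpos, hposT, hnegT⟩, ?_⟩
  rintro T' ⟨hT'pos, hpos', hneg'⟩
  by_contra hne
  rcases lt_or_gt_of_ne hne with hlt | hgt
  · have hm1 : T' < (T' + T) / 2 := by linarith
    have hm2 : (T' + T) / 2 < T := by linarith
    have hmpos : 0 < (T' + T) / 2 := by linarith
    have := hposT _ hmpos hm2
    have := hneg' _ hm1
    linarith
  · have hm1 : T < (T' + T) / 2 := by linarith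
    have hm2 : (T' + T) / 2 < T' := by linarith
    have hmpos : 0 < (T' + T) / 2 := by linarith
    have := hpos' _ hmpos hm2
    have := hnegT _ hm1
    linarith
end

section
/- For all real numbers $x, y$ and $p > 1$, one has $|x-y|^{p-2}(x-y)(x^- - y^-) \ge |x^- - y^-|^p$, where $t^- = \min\{t, 0\}$. -/
lemma signed_power_neg_part_aux (p : ℝ) (hp : 1 < p) (x y : ℝ) (hxy : y ≤ x) :
    |min x 0 - min y 0| ^ p ≤ |x - y| ^ (p - 2) * (x - y) * (min x 0 - min y 0) := by
  set m := min x 0 - min y 0 with hm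
  have hm0 : 0 ≤ m := by
    have : min y 0 ≤ min x 0 := min_le_min hxy le_rfl
    linarith
  have hmd : m ≤ x - y := by
    have h1 : min x 0 ≤ x - y := le_trans (min_le_right _ _) (by linarith)
    have h2 : min x 0 ≤ x := min_le_left _ _
    rcases le_total y 0 with h | h
    · rw [hm, min_eq_left h]; linarith
    · rw [hm, min_eq_right h]; linarith
  rcases eq_or_lt_of_le hm0 with h0 | h0
  · rw [← h0]
    simp [Real.zero_rpow (by positivity : p ≠ 0)]
  · have hd : 0 < x - y := lt_of_lt_of_le h0 hmd
    rw [abs_of_pos h0, abs_of_pos hd]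
    have e : (x - y) ^ (p - 2) * (x - y) = (x - y) ^ (p - 1) := by
      rw [← Real.rpow_add_one hd.ne' (p - 2)]; ring_nf
    rw [e]
    calc m ^ p = m ^ (p - 1) * m := by
            rw [← Real.rpow_add_one h0.ne' (p - 1)]; ring_nf
      _ ≤ (x - y) ^ (p - 1) * m :=
            mul_le_mul_of_nonneg_right (Real.rpow_le_rpow hm0 hmd (by linarith)) hm0

theorem signed_power_neg_part (p : ℝ) (hp : 1 < p) (x y : ℝ) :
    |min x 0 - min y 0| ^ p ≤ |x - y| ^ (p - 2) * (x - y) * (min x 0 - min y 0) := by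
  rcases le_total y x with h | h
  · exact signed_power_neg_part_aux p hp x y h
  · have := signed_power_neg_part_aux p hp y x h
    have e1 : |min y 0 - min x 0| = |min x 0 - min y 0| := abs_sub_comm _ _
    have e2 : |y - x| = |x - y| := abs_sub_comm _ _
    rw [e1, e2] at this
    calc |min x 0 - min y 0| ^ p ≤ |x - y| ^ (p - 2) * (y - x) * (min y 0 - min x 0) := this
      _ = |x - y| ^ (p - 2) * (x - y) * (min x 0 - min y 0) := by ring
end

section
/- Let $p > 1$, let $\gamma : \mathbb{R} \to \mathbb{R}$ be a nondecreasing $C^1$ function, and define $\Gamma(t) = \int_0^t (\gamma'(\tau))^{1/p}\,d\tau$. Then for all real numbers $a, b$, $|a - b|^{p-2}(a-b)(\gamma(a) - \gamma(b)) \ge |\Gamma(a) - \Gamma(b)|^p$. -/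
open MeasureTheory Set intervalIntegral

private lemma deriv_nonneg_of_mono {γ : ℝ → ℝ} (hmono : Monotone γ)
    (hd : Differentiable ℝ γ) (x : ℝ) : 0 ≤ deriv γ x := by
  have h := (hd x).hasDerivAt
  rw [hasDerivAt_iff_tendsto_slope] at h
  have h' : Filter.Tendsto (slope γ x) (nhdsWithin x (Ioi x)) (nhds (deriv γ x)) :=
    h.mono_left (nhdsWithin_mono _ fun y hy => mem_compl_singleton_iff.2 (ne_of_gt hy))
  refine ge_of_tendsto h' ?_
  filter_upwards [self_mem_nhdsWithin] with y hy
  rw [slope_def_field]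
  exact div_nonneg (sub_nonneg.2 (hmono (le_of_lt hy))) (sub_nonneg.2 (le_of_lt hy))

private lemma key_ineq (p : ℝ) (hp : 1 < p)
    (γ : ℝ → ℝ) (hmono : Monotone γ) (hsmooth : ContDiff ℝ 1 γ) {a b : ℝ} (hba : b < a) :
    |(∫ τ in (0:ℝ)..a, (deriv γ τ) ^ (1 / p)) - ∫ τ in (0:ℝ)..b, (deriv γ τ) ^ (1 / p)| ^ p
      ≤ |a - b| ^ (p - 2) * (a - b) * (γ a - γ b) := by
  have hd : Differentiable ℝ γ := hsmooth.differentiable one_ne_zero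
  have hc : Continuous (deriv γ) := hsmooth.continuous_deriv le_rfl
  have hnn : ∀ x, 0 ≤ deriv γ x := deriv_nonneg_of_mono hmono hd
  set f : ℝ → ℝ := fun τ => (deriv γ τ) ^ (1 / p) with hf
  have hp0 : (0:ℝ) < p := by linarith
  have hfc : Continuous f := hc.rpow_const (fun x => Or.inr (by positivity))
  have hfnn : ∀ x, 0 ≤ f x := fun x => Real.rpow_nonneg (hnn x) _
  have hfp : ∀ τ, f τ ^ p = deriv γ τ := fun τ => by
    rw [hf, ← Real.rpow_mul (hnn τ), one_div_mul_cancel hp0.ne', Real.rpow_one]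
  have hab : (0:ℝ) < a - b := sub_pos.2 hba
  -- rewrite LHS as interval integral over b..a
  have hsub : (∫ τ in (0:ℝ)..a, f τ) - ∫ τ in (0:ℝ)..b, f τ = ∫ τ in b..a, f τ :=
    integral_interval_sub_left (hfc.intervalIntegrable 0 a) (hfc.intervalIntegrable 0 b)
  set I : ℝ := ∫ τ in b..a, f τ with hI
  have hInn : 0 ≤ I := intervalIntegral.integral_nonneg hba.le fun x _ => hfnn x
  -- Jensen
  have h0 : volume (Icc b a) ≠ 0 := by
    rw [Real.volume_Icc]; exact (ENNReal.ofReal_pos.2 hab).ne'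
  have ht : volume (Icc b a) ≠ ⊤ := measure_Icc_lt_top.ne
  have hgc : ContinuousOn (fun x : ℝ => x ^ p) (Ici 0) := fun x _ =>
    (Real.continuousAt_rpow_const x p (Or.inr hp0.le)).continuousWithinAt
  have hgi : IntegrableOn ((fun x : ℝ => x ^ p) ∘ f) (Icc b a) volume := by
    have : (fun x : ℝ => x ^ p) ∘ f = deriv γ := by funext τ; exact hfp τ
    rw [this]; exact hc.integrableOn_Icc
  have hjen := (convexOn_rpow hp.le).map_set_average_le hgc isClosed_Ici
    h0 ht (Filter.Eventually.of_forall fun x => hfnn x)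
    (hfc.integrableOn_Icc) hgi
  -- compute the averages
  have hvol : volume.real (Icc b a) = a - b := by
    rw [measureReal_def, Real.volume_Icc, ENNReal.toReal_ofReal hab.le]
  have hIcc_f : ∫ τ in Icc b a, f τ = I := by
    rw [hI, intervalIntegral.integral_of_le hba.le, ← integral_Icc_eq_integral_Ioc]
  have hIcc_g : ∫ τ in Icc b a, f τ ^ p = γ a - γ b := by
    simp only [hfp]
    rw [integral_Icc_eq_integral_Ioc, ← intervalIntegral.integral_of_le hba.le]
    exact intervalIntegral.integral_deriv_eq_sub (fun x _ => hd x) (hc.intervalIntegrable b a)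
  rw [setAverage_eq, setAverage_eq, hvol, hIcc_f, hIcc_g, smul_eq_mul, smul_eq_mul] at hjen
  -- hjen : ((a-b)⁻¹ * I) ^ p ≤ (a-b)⁻¹ * (γ a - γ b)
  have hmul : ((a - b)⁻¹ * I) ^ p = ((a - b) ^ p)⁻¹ * I ^ p := by
    rw [Real.mul_rpow (by positivity) hInn, ← Real.inv_rpow hab.le]
  rw [hmul] at hjen
  have habs : |a - b| ^ (p - 2) * (a - b) = (a - b) ^ (p - 1) := by
    rw [abs_of_pos hab]
    rw [show (a - b) ^ (p-1) = (a-b) ^ (p - 2 + 1) by ring_nf, Real.rpow_add hab,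
      Real.rpow_one]
  rw [hsub, abs_of_nonneg hInn, habs]
  calc I ^ p = (a - b) ^ p * (((a - b) ^ p)⁻¹ * I ^ p) := by
        rw [← mul_assoc, mul_inv_cancel₀ (by positivity), one_mul]
    _ ≤ (a - b) ^ p * ((a - b)⁻¹ * (γ a - γ b)) := by
        apply mul_le_mul_of_nonneg_left hjen (by positivity)
    _ = (a - b) ^ (p - 1) * (γ a - γ b) := by
        rw [← mul_assoc, ← Real.rpow_neg_one (a-b), ← Real.rpow_add hab,
          show p + -1 = p - 1 by ring]

theorem jensen_truncation_inequality (p : ℝ) (hp : 1 < p)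
    (γ : ℝ → ℝ) (hmono : Monotone γ) (hsmooth : ContDiff ℝ 1 γ) (a b : ℝ) :
    |(∫ τ in (0:ℝ)..a, (deriv γ τ) ^ (1 / p)) - ∫ τ in (0:ℝ)..b, (deriv γ τ) ^ (1 / p)| ^ p
      ≤ |a - b| ^ (p - 2) * (a - b) * (γ a - γ b) := by
  rcases lt_trichotomy b a with h | h | h
  · exact key_ineq p hp γ hmono hsmooth h
  · subst h
    simp [Real.zero_rpow (by linarith : p ≠ 0)]
  · have hsymm : |a - b| ^ (p - 2) * (a - b) * (γ a - γ b)
        = |b - a| ^ (p - 2) * (b - a) * (γ b - γ a) := by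
      rw [abs_sub_comm]; ring
    rw [hsymm, abs_sub_comm]
    exact key_ineq p hp γ hmono hsmooth h
end
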